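/- arXiv:1409.0454 — 2 statements merged into one kernel-verified Lean document; each statement's English description precedes it below -/
import Mathlib

section
/- Let S, X₁, X₂, Z be mutually independent random variables with values in {+1,-1}, where P(S = 1) = P(S = -1) = 1/2, P(Z = 1) = p, P(X₁ = 1) = q₁ and P(X₂ = 1) = q₂. Define Y₁ = S·X₁ (real multiplication) and Y₂ = X₂ + Z (real addition, with values in {-2,0,2}), and Y = (Y₁,Y₂). Then I(X₁ ; Y | S, X₂) = h₂(q₁) and I(X₁,X₂ ; Y) = g(p,q₂) - h₂(p), where g(p,q₂) = -p q₂ log₂(p q₂) - (1-p)(1-q₂) log₂((1-p)(1-q₂)) - (p*q₂) log₂(p*q₂). -/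
open scoped BigOperators
open Classical

noncomputable section

/-- Probability that the random variable `X` equals `x` under the pmf `p`. -/
def pr {Ω α : Type*} [Fintype Ω] (p : Ω → ℝ) (X : Ω → α) (x : α) : ℝ :=
  ∑ ω : Ω, if X ω = x then p ω else 0

/-- Shannon entropy (in bits), with the convention `0 · log₂ 0 = 0`. -/
def ent {Ω α : Type*} [Fintype Ω] (p : Ω → ℝ) (X : Ω → α) : ℝ :=
  -∑ x ∈ Finset.univ.image X, pr p X x * Real.logb 2 (pr p X x)

/-- Conditional entropy `H(X|Y) = H(X,Y) - H(Y)`. -/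
def condEnt {Ω α β : Type*} [Fintype Ω] (p : Ω → ℝ) (X : Ω → α) (Y : Ω → β) : ℝ :=
  ent p (fun ω => (X ω, Y ω)) - ent p Y

/-- Mutual information `I(X;Y) = H(X) + H(Y) - H(X,Y)`. -/
def mi {Ω α β : Type*} [Fintype Ω] (p : Ω → ℝ) (X : Ω → α) (Y : Ω → β) : ℝ :=
  ent p X + ent p Y - ent p (fun ω => (X ω, Y ω))

/-- Conditional mutual information `I(X;Y|Z) = H(X,Z) + H(Y,Z) - H(X,Y,Z) - H(Z)`. -/
def cmi {Ω α β γ : Type*} [Fintype Ω] (p : Ω → ℝ) (X : Ω → α) (Y : Ω → β) (Z : Ω → γ) : ℝ :=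
  ent p (fun ω => (X ω, Z ω)) + ent p (fun ω => (Y ω, Z ω))
    - ent p (fun ω => (X ω, Y ω, Z ω)) - ent p Z

/-- `p` is a probability mass function on the finite sample space `Ω`. -/
def IsPMF {Ω : Type*} [Fintype Ω] (p : Ω → ℝ) : Prop :=
  (∀ ω, 0 ≤ p ω) ∧ ∑ ω : Ω, p ω = 1

/-- The random variables `X` and `Y` are independent under `p`. -/
def IndepRV {Ω α β : Type*} [Fintype Ω] (p : Ω → ℝ) (X : Ω → α) (Y : Ω → β) : Prop :=
  ∀ x y, pr p (fun ω => (X ω, Y ω)) (x, y) = pr p X x * pr p Y y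

end

noncomputable section
/-- Binary entropy function `h₂` (in bits). -/
def binEnt (a : ℝ) : ℝ := -(a * Real.logb 2 a) - (1 - a) * Real.logb 2 (1 - a)

/-- Binary convolution `a * b = a(1-b) + b(1-a)`. -/
def bconv (a b : ℝ) : ℝ := a * (1 - b) + b * (1 - a)

/-- The function `g(p,q₂)` of Example 6. -/
def gfun (p q₂ : ℝ) : ℝ :=
  -(p * q₂ * Real.logb 2 (p * q₂))
    - (1 - p) * (1 - q₂) * Real.logb 2 ((1 - p) * (1 - q₂))
    - bconv p q₂ * Real.logb 2 (bconv p q₂)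
end


noncomputable section

-- auxiliary machinery (as tested)
def val (b : Bool) : ℝ := if b then 1 else -1
def wq (b : Bool) (t : ℝ) : ℝ := if b then t else 1 - t
def bof (r : ℝ) : Bool := if r = 1 then true else false
def Fb (x : ℝ) : ℝ := x * Real.logb 2 x
def yv : Fin 3 → ℝ := ![2, 0, -2]

lemma yv_inj : Function.Injective yv := by
  intro k k' h
  fin_cases k <;> fin_cases k' <;> simp_all [yv] <;> norm_num at h

lemma val_inj : Function.Injective val := by
  intro a b h
  cases a <;> cases b <;> simp [val] at h ⊢ <;> norm_num at h

lemma val_ne_zero (b : Bool) : val b ≠ 0 := by cases b <;> norm_num [val]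

lemma val_bof {r : ℝ} (hr : r = 1 ∨ r = -1) : val (bof r) = r := by
  rcases hr with h | h <;> subst h <;> norm_num [bof, val]

lemma Fb_mul {x y : ℝ} (hx : 0 ≤ x) (hy : 0 ≤ y) :
    Fb (x * y) = x * Fb y + y * Fb x := by
  rcases eq_or_lt_of_le hx with h | h
  · simp [Fb, ← h]
  rcases eq_or_lt_of_le hy with h' | h'
  · simp [Fb, ← h']
  · unfold Fb
    rw [Real.logb_mul h.ne' h'.ne']
    ring

lemma Fb_two_inv : Fb (2⁻¹ : ℝ) = -2⁻¹ := by
  unfold Fb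
  rw [Real.logb_inv, Real.logb_self_eq_one] <;> norm_num

lemma Fb_half {x : ℝ} (hx : 0 ≤ x) : Fb (2⁻¹ * x) = 2⁻¹ * Fb x - 2⁻¹ * x := by
  rw [Fb_mul (by norm_num) hx, Fb_two_inv]
  ring

variable {Ω : Type*} [Fintype Ω] (μ : Ω → ℝ)

lemma pr_nonneg (hμ : ∀ ω, 0 ≤ μ ω) {α : Type*} (X : Ω → α) (x : α) :
    0 ≤ pr μ X x := by
  refine Finset.sum_nonneg fun ω _ => ?_
  split
  · exact hμ ω
  · exact le_rfl

lemma pr_zero_of_forall_ne {α : Type*} {X : Ω → α} {x : α}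
    (h : ∀ ω, X ω ≠ x) : pr μ X x = 0 := by
  refine Finset.sum_eq_zero fun ω _ => ?_
  simp [h ω]

lemma pr_compl (hμ : IsPMF μ) {X : Ω → ℝ} (hr : ∀ ω, X ω = 1 ∨ X ω = -1) :
    pr μ X (-1) = 1 - pr μ X 1 := by
  have key : pr μ X 1 + pr μ X (-1) = 1 := by
    have hterm : ∀ ω : Ω, ((if X ω = 1 then μ ω else 0) + if X ω = -1 then μ ω else 0) = μ ω := by
      intro ω
      rcases hr ω with h | h <;> rw [h] <;> norm_num
    rw [pr, pr, ← Finset.sum_add_distrib, Finset.sum_congr rfl fun ω _ => hterm ω, hμ.2]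
  linarith

lemma ent_param {α ι : Type*} [Fintype ι] (X : Ω → α) (t : ι → α)
    (hinj : Function.Injective t) (hsurj : ∀ ω, ∃ i, X ω = t i) :
    ent μ X = -∑ i, pr μ X (t i) * Real.logb 2 (pr μ X (t i)) := by
  unfold ent
  congr 1
  have hsub : Finset.univ.image X ⊆ Finset.univ.image t := by
    intro x hx
    simp only [Finset.mem_image, Finset.mem_univ, true_and] at hx ⊢
    obtain ⟨ω, hω⟩ := hx
    obtain ⟨i, hi⟩ := hsurj ω
    exact ⟨i, by rw [← hi, hω]⟩
  have hpad : ∀ x ∈ Finset.univ.image t, x ∉ Finset.univ.image X →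
      pr μ X x * Real.logb 2 (pr μ X x) = 0 := by
    intro x _ hx
    have hzero : pr μ X x = 0 := by
      refine pr_zero_of_forall_ne μ fun ω hω => ?_
      exact hx (by simp only [Finset.mem_image, Finset.mem_univ, true_and]; exact ⟨ω, hω⟩)
    simp [hzero]
  rw [Finset.sum_subset hsub hpad, Finset.sum_image (fun i _ j _ h => hinj h)]

lemma pr_comp {α : Type*} (S X₁ X₂ Z : Ω → ℝ)
    (hS : ∀ ω, S ω = 1 ∨ S ω = -1) (h1 : ∀ ω, X₁ ω = 1 ∨ X₁ ω = -1)
    (h2 : ∀ ω, X₂ ω = 1 ∨ X₂ ω = -1) (hz : ∀ ω, Z ω = 1 ∨ Z ω = -1)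
    (f : ℝ × ℝ × ℝ × ℝ → α) (x : α) :
    pr μ (fun ω => f (S ω, X₁ ω, X₂ ω, Z ω)) x
      = ∑ b : Bool × Bool × Bool × Bool,
          if f (val b.1, val b.2.1, val b.2.2.1, val b.2.2.2) = x
          then pr μ (fun ω => (S ω, X₁ ω, X₂ ω, Z ω))
                 (val b.1, val b.2.1, val b.2.2.1, val b.2.2.2)
          else 0 := by
  have step : ∀ b : Bool × Bool × Bool × Bool,
      (if f (val b.1, val b.2.1, val b.2.2.1, val b.2.2.2) = x
       then pr μ (fun ω => (S ω, X₁ ω, X₂ ω, Z ω))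
              (val b.1, val b.2.1, val b.2.2.1, val b.2.2.2)
       else 0)
      = ∑ ω : Ω, if (S ω, X₁ ω, X₂ ω, Z ω) = (val b.1, val b.2.1, val b.2.2.1, val b.2.2.2)
          then (if f (S ω, X₁ ω, X₂ ω, Z ω) = x then μ ω else 0) else 0 := by
    intro b
    by_cases hc : f (val b.1, val b.2.1, val b.2.2.1, val b.2.2.2) = x
    · rw [if_pos hc, pr]
      refine Finset.sum_congr rfl fun ω _ => ?_
      by_cases hw : (S ω, X₁ ω, X₂ ω, Z ω) = (val b.1, val b.2.1, val b.2.2.1, val b.2.2.2)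
      · simp [hw, hc]
      · simp [hw]
    · rw [if_neg hc]
      symm
      refine Finset.sum_eq_zero fun ω _ => ?_
      by_cases hw : (S ω, X₁ ω, X₂ ω, Z ω) = (val b.1, val b.2.1, val b.2.2.1, val b.2.2.2)
      · simp [hw, hc]
      · simp [hw]
  simp only [step]
  rw [Finset.sum_comm]
  rw [pr]
  refine Finset.sum_congr rfl fun ω _ => ?_
  rcases hS ω with hs | hs <;> rcases h1 ω with ha | ha <;>
    rcases h2 ω with hb | hb <;> rcases hz ω with hc | hc <;>
    · simp only [Fintype.sum_prod_type, Fintype.sum_bool, hs, ha, hb, hc, val, Prod.ext_iff]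
      norm_num

lemma pr_comp' {α : Type*} (hμ : IsPMF μ) (S X₁ X₂ Z : Ω → ℝ) (p q₁ q₂ : ℝ)
    (hS : ∀ ω, S ω = 1 ∨ S ω = -1) (h1 : ∀ ω, X₁ ω = 1 ∨ X₁ ω = -1)
    (h2 : ∀ ω, X₂ ω = 1 ∨ X₂ ω = -1) (hz : ∀ ω, Z ω = 1 ∨ Z ω = -1)
    (hIndep : ∀ a b c d : ℝ,
      pr μ (fun ω => (S ω, X₁ ω, X₂ ω, Z ω)) (a, b, c, d)
        = pr μ S a * pr μ X₁ b * pr μ X₂ c * pr μ Z d)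
    (hS1 : pr μ S 1 = 1/2) (hS2 : pr μ S (-1) = 1/2)
    (hZ : pr μ Z 1 = p) (hX₁ : pr μ X₁ 1 = q₁) (hX₂ : pr μ X₂ 1 = q₂)
    (f : ℝ × ℝ × ℝ × ℝ → α) (x : α) :
    pr μ (fun ω => f (S ω, X₁ ω, X₂ ω, Z ω)) x
      = ∑ b : Bool × Bool × Bool × Bool,
          if f (val b.1, val b.2.1, val b.2.2.1, val b.2.2.2) = x
          then 2⁻¹ * wq b.2.1 q₁ * wq b.2.2.1 q₂ * wq b.2.2.2 p
          else 0 := by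
  rw [pr_comp μ S X₁ X₂ Z hS h1 h2 hz f x]
  refine Finset.sum_congr rfl fun b _ => ?_
  have hval : pr μ (fun ω => (S ω, X₁ ω, X₂ ω, Z ω))
      (val b.1, val b.2.1, val b.2.2.1, val b.2.2.2)
      = 2⁻¹ * wq b.2.1 q₁ * wq b.2.2.1 q₂ * wq b.2.2.2 p := by
    rw [hIndep]
    have c1 := pr_compl μ hμ h1
    have c2 := pr_compl μ hμ h2
    have cz := pr_compl μ hμ hz
    obtain ⟨bs, b1, b2, bz⟩ := b
    cases bs <;> cases b1 <;> cases b2 <;> cases bz <;>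
      simp [val, wq, hS1, hS2, hX₁, hX₂, hZ, c1, c2, cz]
  rw [hval]

end

set_option maxHeartbeats 4000000 in
/-- **Example 6, evaluation of the capacity formula.**  For mutually independent
`{+1,-1}`-valued `S, X₁, X₂, Z` with `P(S=1) = P(S=-1) = 1/2`, `P(Z=1) = p`,
`P(X₁=1) = q₁`, `P(X₂=1) = q₂`, and `Y₁ = S·X₁`, `Y₂ = X₂ + Z`, `Y = (Y₁,Y₂)`:
`I(X₁;Y|S,X₂) = h₂(q₁)` and `I(X₁,X₂;Y) = g(p,q₂) - h₂(p)`. -/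
theorem example6_mutual_informations
    {Ω : Type*} [Fintype Ω]
    (μ : Ω → ℝ) (hμ : IsPMF μ)
    (S X₁ X₂ Z : Ω → ℝ) (p q₁ q₂ : ℝ)
    (hSrange : ∀ ω, S ω = 1 ∨ S ω = -1)
    (hX₁range : ∀ ω, X₁ ω = 1 ∨ X₁ ω = -1)
    (hX₂range : ∀ ω, X₂ ω = 1 ∨ X₂ ω = -1)
    (hZrange : ∀ ω, Z ω = 1 ∨ Z ω = -1)
    (hIndep : ∀ a b c d : ℝ,
      pr μ (fun ω => (S ω, X₁ ω, X₂ ω, Z ω)) (a, b, c, d)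
        = pr μ S a * pr μ X₁ b * pr μ X₂ c * pr μ Z d)
    (hS1 : pr μ S 1 = 1/2) (hS2 : pr μ S (-1) = 1/2)
    (hZ : pr μ Z 1 = p) (hX₁ : pr μ X₁ 1 = q₁) (hX₂ : pr μ X₂ 1 = q₂) :
    cmi μ X₁ (fun ω => (S ω * X₁ ω, X₂ ω + Z ω)) (fun ω => (S ω, X₂ ω)) = binEnt q₁ ∧
    mi μ (fun ω => (X₁ ω, X₂ ω)) (fun ω => (S ω * X₁ ω, X₂ ω + Z ω))
      = gfun p q₂ - binEnt p := by
    -- basic facts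
  have hq₁0 : 0 ≤ q₁ := hX₁ ▸ pr_nonneg μ hμ.1 X₁ 1
  have hq₂0 : 0 ≤ q₂ := hX₂ ▸ pr_nonneg μ hμ.1 X₂ 1
  have hp0 : 0 ≤ p := hZ ▸ pr_nonneg μ hμ.1 Z 1
  have hq₁1 : q₁ ≤ 1 := by
    have h := pr_nonneg μ hμ.1 X₁ (-1)
    rw [pr_compl μ hμ hX₁range, hX₁] at h; linarith
  have hq₂1 : q₂ ≤ 1 := by
    have h := pr_nonneg μ hμ.1 X₂ (-1)
    rw [pr_compl μ hμ hX₂range, hX₂] at h; linarith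
  have hp1 : p ≤ 1 := by
    have h := pr_nonneg μ hμ.1 Z (-1)
    rw [pr_compl μ hμ hZrange, hZ] at h; linarith
  have hq₁0' : (0:ℝ) ≤ 1 - q₁ := by linarith
  have hq₂0' : (0:ℝ) ≤ 1 - q₂ := by linarith
  have hp0' : (0:ℝ) ≤ 1 - p := by linarith
  -- E1 : ent (X₁,(S,X₂))
  have hE1 : ent μ (fun ω => (X₁ ω, (S ω, X₂ ω)))
      = -(2 * (Fb (2⁻¹ * (q₁ * q₂)) + Fb (2⁻¹ * (q₁ * (1 - q₂)))
            + Fb (2⁻¹ * ((1 - q₁) * q₂)) + Fb (2⁻¹ * ((1 - q₁) * (1 - q₂))))) := by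
    rw [ent_param μ (fun ω => (X₁ ω, (S ω, X₂ ω)))
        (fun i : Bool × Bool × Bool => (val i.1, (val i.2.1, val i.2.2)))
        (by
          intro i j h
          obtain ⟨a, s, c⟩ := i; obtain ⟨a', s', c'⟩ := j
          simp only [Prod.mk.injEq] at h ⊢
          exact ⟨val_inj h.1, val_inj h.2.1, val_inj h.2.2⟩)
        (fun ω => ⟨(bof (X₁ ω), bof (S ω), bof (X₂ ω)),
          by simp only [val_bof (hX₁range ω), val_bof (hSrange ω), val_bof (hX₂range ω)]⟩)]
    have hp : ∀ i : Bool × Bool × Bool,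
        pr μ (fun ω => (X₁ ω, (S ω, X₂ ω))) (val i.1, (val i.2.1, val i.2.2))
          = 2⁻¹ * (wq i.1 q₁ * wq i.2.2 q₂) := by
      intro i
      refine (pr_comp' μ hμ S X₁ X₂ Z p q₁ q₂ hSrange hX₁range hX₂range hZrange hIndep
        hS1 hS2 hZ hX₁ hX₂ (fun v => (v.2.1, (v.1, v.2.2.1)))
        (val i.1, (val i.2.1, val i.2.2))).trans ?_
      obtain ⟨a, s, c⟩ := i
      cases a <;> cases s <;> cases c <;>
        · simp only [Fintype.sum_prod_type, Fintype.sum_bool, val, wq, Prod.mk.injEq]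
          norm_num
          ring
    simp only [hp]
    simp only [Fintype.sum_prod_type, Fintype.sum_bool, wq, Fb, if_true, Bool.false_eq_true,
      if_false]
    ring
  -- E4 : ent (S,X₂)
  have hE4 : ent μ (fun ω => (S ω, X₂ ω))
      = -(2 * (Fb (2⁻¹ * q₂) + Fb (2⁻¹ * (1 - q₂)))) := by
    rw [ent_param μ (fun ω => (S ω, X₂ ω))
        (fun i : Bool × Bool => (val i.1, val i.2))
        (by
          intro i j h
          obtain ⟨s, c⟩ := i; obtain ⟨s', c'⟩ := j
          simp only [Prod.mk.injEq] at h ⊢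
          exact ⟨val_inj h.1, val_inj h.2⟩)
        (fun ω => ⟨(bof (S ω), bof (X₂ ω)),
          by simp only [val_bof (hSrange ω), val_bof (hX₂range ω)]⟩)]
    have hp : ∀ i : Bool × Bool,
        pr μ (fun ω => (S ω, X₂ ω)) (val i.1, val i.2) = 2⁻¹ * wq i.2 q₂ := by
      intro i
      refine (pr_comp' μ hμ S X₁ X₂ Z p q₁ q₂ hSrange hX₁range hX₂range hZrange hIndep
        hS1 hS2 hZ hX₁ hX₂ (fun v => (v.1, v.2.2.1)) (val i.1, val i.2)).trans ?_
      obtain ⟨s, c⟩ := i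
      cases s <;> cases c <;>
        · simp only [Fintype.sum_prod_type, Fintype.sum_bool, val, wq, Prod.mk.injEq]
          norm_num
          ring
    simp only [hp]
    simp only [Fintype.sum_prod_type, Fintype.sum_bool, wq, Fb, if_true, Bool.false_eq_true,
      if_false]
    ring
  -- E2 : ent (Y,(S,X₂))
  have hE2 : ent μ (fun ω => ((S ω * X₁ ω, X₂ ω + Z ω), (S ω, X₂ ω)))
      = -(2 * (Fb (2⁻¹ * (q₁ * (q₂ * p))) + Fb (2⁻¹ * (q₁ * (q₂ * (1 - p))))
            + Fb (2⁻¹ * (q₁ * ((1 - q₂) * p))) + Fb (2⁻¹ * (q₁ * ((1 - q₂) * (1 - p))))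
            + Fb (2⁻¹ * ((1 - q₁) * (q₂ * p))) + Fb (2⁻¹ * ((1 - q₁) * (q₂ * (1 - p))))
            + Fb (2⁻¹ * ((1 - q₁) * ((1 - q₂) * p)))
            + Fb (2⁻¹ * ((1 - q₁) * ((1 - q₂) * (1 - p)))))) := by
    rw [ent_param μ (fun ω => ((S ω * X₁ ω, X₂ ω + Z ω), (S ω, X₂ ω)))
        (fun i : Bool × Bool × Bool × Bool =>
          ((val i.1 * val i.2.1, val i.2.2.1 + val i.2.2.2), (val i.1, val i.2.2.1)))
        (by
          intro i j h
          obtain ⟨s, a, b, z⟩ := i; obtain ⟨s', a', b', z'⟩ := j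
          simp only [Prod.mk.injEq] at h ⊢
          obtain ⟨⟨hm, hadd⟩, hs, hb⟩ := h
          rw [← hs] at hm
          rw [← hb] at hadd
          exact ⟨val_inj hs, val_inj (mul_left_cancel₀ (val_ne_zero s) hm),
            val_inj hb, val_inj (add_left_cancel hadd)⟩)
        (fun ω => ⟨(bof (S ω), bof (X₁ ω), bof (X₂ ω), bof (Z ω)),
          by simp only [val_bof (hSrange ω), val_bof (hX₁range ω), val_bof (hX₂range ω),
            val_bof (hZrange ω)]⟩)]
    have hp : ∀ i : Bool × Bool × Bool × Bool,
        pr μ (fun ω => ((S ω * X₁ ω, X₂ ω + Z ω), (S ω, X₂ ω)))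
          ((val i.1 * val i.2.1, val i.2.2.1 + val i.2.2.2), (val i.1, val i.2.2.1))
          = 2⁻¹ * (wq i.2.1 q₁ * (wq i.2.2.1 q₂ * wq i.2.2.2 p)) := by
      intro i
      refine (pr_comp' μ hμ S X₁ X₂ Z p q₁ q₂ hSrange hX₁range hX₂range hZrange hIndep
        hS1 hS2 hZ hX₁ hX₂ (fun v => ((v.1 * v.2.1, v.2.2.1 + v.2.2.2), (v.1, v.2.2.1)))
        ((val i.1 * val i.2.1, val i.2.2.1 + val i.2.2.2), (val i.1, val i.2.2.1))).trans ?_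
      obtain ⟨s, a, b, z⟩ := i
      cases s <;> cases a <;> cases b <;> cases z <;>
        · simp only [Fintype.sum_prod_type, Fintype.sum_bool, val, wq, Prod.mk.injEq]
          norm_num
          ring
    simp only [hp]
    simp only [Fintype.sum_prod_type, Fintype.sum_bool, wq, Fb, if_true, Bool.false_eq_true,
      if_false]
    ring
  -- E3 : ent (X₁,Y,(S,X₂))
  have hE3 : ent μ (fun ω => (X₁ ω, (S ω * X₁ ω, X₂ ω + Z ω), (S ω, X₂ ω)))
      = -(2 * (Fb (2⁻¹ * (q₁ * (q₂ * p))) + Fb (2⁻¹ * (q₁ * (q₂ * (1 - p))))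
            + Fb (2⁻¹ * (q₁ * ((1 - q₂) * p))) + Fb (2⁻¹ * (q₁ * ((1 - q₂) * (1 - p))))
            + Fb (2⁻¹ * ((1 - q₁) * (q₂ * p))) + Fb (2⁻¹ * ((1 - q₁) * (q₂ * (1 - p))))
            + Fb (2⁻¹ * ((1 - q₁) * ((1 - q₂) * p)))
            + Fb (2⁻¹ * ((1 - q₁) * ((1 - q₂) * (1 - p)))))) := by
    rw [ent_param μ (fun ω => (X₁ ω, (S ω * X₁ ω, X₂ ω + Z ω), (S ω, X₂ ω)))
        (fun i : Bool × Bool × Bool × Bool =>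
          (val i.2.1, (val i.1 * val i.2.1, val i.2.2.1 + val i.2.2.2), (val i.1, val i.2.2.1)))
        (by
          intro i j h
          obtain ⟨s, a, b, z⟩ := i; obtain ⟨s', a', b', z'⟩ := j
          simp only [Prod.mk.injEq] at h ⊢
          obtain ⟨ha, ⟨hm, hadd⟩, hs, hb⟩ := h
          rw [← hb] at hadd
          exact ⟨val_inj hs, val_inj ha, val_inj hb, val_inj (add_left_cancel hadd)⟩)
        (fun ω => ⟨(bof (S ω), bof (X₁ ω), bof (X₂ ω), bof (Z ω)),
          by simp only [val_bof (hSrange ω), val_bof (hX₁range ω), val_bof (hX₂range ω),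
            val_bof (hZrange ω)]⟩)]
    have hp : ∀ i : Bool × Bool × Bool × Bool,
        pr μ (fun ω => (X₁ ω, (S ω * X₁ ω, X₂ ω + Z ω), (S ω, X₂ ω)))
          (val i.2.1, (val i.1 * val i.2.1, val i.2.2.1 + val i.2.2.2), (val i.1, val i.2.2.1))
          = 2⁻¹ * (wq i.2.1 q₁ * (wq i.2.2.1 q₂ * wq i.2.2.2 p)) := by
      intro i
      refine (pr_comp' μ hμ S X₁ X₂ Z p q₁ q₂ hSrange hX₁range hX₂range hZrange hIndep
        hS1 hS2 hZ hX₁ hX₂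
        (fun v => (v.2.1, (v.1 * v.2.1, v.2.2.1 + v.2.2.2), (v.1, v.2.2.1)))
        (val i.2.1, (val i.1 * val i.2.1, val i.2.2.1 + val i.2.2.2),
          (val i.1, val i.2.2.1))).trans ?_
      obtain ⟨s, a, b, z⟩ := i
      cases s <;> cases a <;> cases b <;> cases z <;>
        · simp only [Fintype.sum_prod_type, Fintype.sum_bool, val, wq, Prod.mk.injEq]
          norm_num
          ring
    simp only [hp]
    simp only [Fintype.sum_prod_type, Fintype.sum_bool, wq, Fb, if_true, Bool.false_eq_true,
      if_false]
    ring
  -- part 1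
  have part1 : cmi μ X₁ (fun ω => (S ω * X₁ ω, X₂ ω + Z ω)) (fun ω => (S ω, X₂ ω))
      = binEnt q₁ := by
    simp only [cmi]
    rw [hE1, hE2, hE3, hE4]
    have m1 : Fb (2⁻¹ * (q₁ * q₂)) = q₁ * Fb (2⁻¹ * q₂) + (2⁻¹ * q₂) * Fb q₁ := by
      rw [show (2⁻¹ * (q₁ * q₂) : ℝ) = q₁ * (2⁻¹ * q₂) by ring]
      exact Fb_mul hq₁0 (mul_nonneg (by norm_num) hq₂0)
    have m2 : Fb (2⁻¹ * (q₁ * (1 - q₂))) = q₁ * Fb (2⁻¹ * (1 - q₂)) + (2⁻¹ * (1 - q₂)) * Fb q₁ := by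
      rw [show (2⁻¹ * (q₁ * (1 - q₂)) : ℝ) = q₁ * (2⁻¹ * (1 - q₂)) by ring]
      exact Fb_mul hq₁0 (mul_nonneg (by norm_num) hq₂0')
    have m3 : Fb (2⁻¹ * ((1 - q₁) * q₂))
        = (1 - q₁) * Fb (2⁻¹ * q₂) + (2⁻¹ * q₂) * Fb (1 - q₁) := by
      rw [show (2⁻¹ * ((1 - q₁) * q₂) : ℝ) = (1 - q₁) * (2⁻¹ * q₂) by ring]
      exact Fb_mul hq₁0' (mul_nonneg (by norm_num) hq₂0)
    have m4 : Fb (2⁻¹ * ((1 - q₁) * (1 - q₂)))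
        = (1 - q₁) * Fb (2⁻¹ * (1 - q₂)) + (2⁻¹ * (1 - q₂)) * Fb (1 - q₁) := by
      rw [show (2⁻¹ * ((1 - q₁) * (1 - q₂)) : ℝ) = (1 - q₁) * (2⁻¹ * (1 - q₂)) by ring]
      exact Fb_mul hq₁0' (mul_nonneg (by norm_num) hq₂0')
    rw [m1, m2, m3, m4]
    simp only [binEnt, Fb]
    ring
  -- E5 : ent (X₁,X₂)
  have hE5 : ent μ (fun ω => (X₁ ω, X₂ ω))
      = -(Fb (q₁ * q₂) + Fb (q₁ * (1 - q₂)) + Fb ((1 - q₁) * q₂) + Fb ((1 - q₁) * (1 - q₂))) := by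
    rw [ent_param μ (fun ω => (X₁ ω, X₂ ω))
        (fun i : Bool × Bool => (val i.1, val i.2))
        (by
          intro i j h
          obtain ⟨a, c⟩ := i; obtain ⟨a', c'⟩ := j
          simp only [Prod.mk.injEq] at h ⊢
          exact ⟨val_inj h.1, val_inj h.2⟩)
        (fun ω => ⟨(bof (X₁ ω), bof (X₂ ω)),
          by simp only [val_bof (hX₁range ω), val_bof (hX₂range ω)]⟩)]
    have hp : ∀ i : Bool × Bool,
        pr μ (fun ω => (X₁ ω, X₂ ω)) (val i.1, val i.2) = wq i.1 q₁ * wq i.2 q₂ := by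
      intro i
      refine (pr_comp' μ hμ S X₁ X₂ Z p q₁ q₂ hSrange hX₁range hX₂range hZrange hIndep
        hS1 hS2 hZ hX₁ hX₂ (fun v => (v.2.1, v.2.2.1)) (val i.1, val i.2)).trans ?_
      obtain ⟨a, c⟩ := i
      cases a <;> cases c <;>
        · simp only [Fintype.sum_prod_type, Fintype.sum_bool, val, wq, Prod.mk.injEq]
          norm_num
          ring
    simp only [hp]
    simp only [Fintype.sum_prod_type, Fintype.sum_bool, wq, Fb, if_true, Bool.false_eq_true,
      if_false]
    ring
  -- E6 : ent Y
  have hE6 : ent μ (fun ω => (S ω * X₁ ω, X₂ ω + Z ω))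
      = -(2 * (Fb (2⁻¹ * (q₂ * p)) + Fb (2⁻¹ * bconv p q₂)
            + Fb (2⁻¹ * ((1 - q₂) * (1 - p))))) := by
    rw [ent_param μ (fun ω => (S ω * X₁ ω, X₂ ω + Z ω))
        (fun i : Bool × Fin 3 => (val i.1, yv i.2))
        (by
          intro i j h
          obtain ⟨a, k⟩ := i; obtain ⟨a', k'⟩ := j
          simp only [Prod.mk.injEq] at h ⊢
          exact ⟨val_inj h.1, yv_inj h.2⟩)
        (by
          intro ω
          have hy1 : S ω * X₁ ω = 1 ∨ S ω * X₁ ω = -1 := by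
            rcases hSrange ω with h | h <;> rcases hX₁range ω with h' | h' <;>
              rw [h, h'] <;> norm_num
          refine ⟨(bof (S ω * X₁ ω),
            if X₂ ω + Z ω = 2 then 0 else if X₂ ω + Z ω = 0 then 1 else 2), ?_⟩
          have h2' : yv (if X₂ ω + Z ω = 2 then (0 : Fin 3)
              else if X₂ ω + Z ω = 0 then 1 else 2) = X₂ ω + Z ω := by
            rcases hX₂range ω with h | h <;> rcases hZrange ω with h' | h' <;>
              rw [h, h'] <;>
              norm_num [yv, Matrix.cons_val_zero, Matrix.cons_val_one, Matrix.head_cons,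
                Matrix.cons_val_two, Matrix.tail_cons]
          simp only [val_bof hy1, h2'])]
    have hp : ∀ i : Bool × Fin 3,
        pr μ (fun ω => (S ω * X₁ ω, X₂ ω + Z ω)) (val i.1, yv i.2)
          = 2⁻¹ * ![q₂ * p, bconv p q₂, (1 - q₂) * (1 - p)] i.2 := by
      intro i
      refine (pr_comp' μ hμ S X₁ X₂ Z p q₁ q₂ hSrange hX₁range hX₂range hZrange hIndep
        hS1 hS2 hZ hX₁ hX₂ (fun v => (v.1 * v.2.1, v.2.2.1 + v.2.2.2))
        (val i.1, yv i.2)).trans ?_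
      obtain ⟨a, k⟩ := i
      cases a <;> fin_cases k <;>
        · simp only [Fintype.sum_prod_type, Fintype.sum_bool, val, wq, yv,
            Matrix.cons_val_zero, Matrix.cons_val_one, Matrix.head_cons,
            Matrix.cons_val_two, Matrix.tail_cons, Prod.mk.injEq]
          norm_num [bconv]
          ring
    simp only [hp]
    simp only [Fintype.sum_prod_type, Fintype.sum_bool, Fin.sum_univ_three,
      Matrix.cons_val_zero, Matrix.cons_val_one, Matrix.head_cons,
      Matrix.cons_val_two, Matrix.tail_cons, Fb]
    ring
  -- E7 : ent ((X₁,X₂),Y)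
  have hE7 : ent μ (fun ω => ((X₁ ω, X₂ ω), (S ω * X₁ ω, X₂ ω + Z ω)))
      = -(2 * (Fb (2⁻¹ * (q₁ * (q₂ * p))) + Fb (2⁻¹ * (q₁ * (q₂ * (1 - p))))
            + Fb (2⁻¹ * (q₁ * ((1 - q₂) * p))) + Fb (2⁻¹ * (q₁ * ((1 - q₂) * (1 - p))))
            + Fb (2⁻¹ * ((1 - q₁) * (q₂ * p))) + Fb (2⁻¹ * ((1 - q₁) * (q₂ * (1 - p))))
            + Fb (2⁻¹ * ((1 - q₁) * ((1 - q₂) * p)))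
            + Fb (2⁻¹ * ((1 - q₁) * ((1 - q₂) * (1 - p)))))) := by
    rw [ent_param μ (fun ω => ((X₁ ω, X₂ ω), (S ω * X₁ ω, X₂ ω + Z ω)))
        (fun i : Bool × Bool × Bool × Bool =>
          ((val i.2.1, val i.2.2.1), (val i.1 * val i.2.1, val i.2.2.1 + val i.2.2.2)))
        (by
          intro i j h
          obtain ⟨s, a, b, z⟩ := i; obtain ⟨s', a', b', z'⟩ := j
          simp only [Prod.mk.injEq] at h ⊢
          obtain ⟨⟨ha, hb⟩, hm, hadd⟩ := h
          rw [← ha] at hm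
          rw [← hb] at hadd
          exact ⟨val_inj (mul_right_cancel₀ (val_ne_zero a) hm), val_inj ha, val_inj hb,
            val_inj (add_left_cancel hadd)⟩)
        (fun ω => ⟨(bof (S ω), bof (X₁ ω), bof (X₂ ω), bof (Z ω)),
          by simp only [val_bof (hSrange ω), val_bof (hX₁range ω), val_bof (hX₂range ω),
            val_bof (hZrange ω)]⟩)]
    have hp : ∀ i : Bool × Bool × Bool × Bool,
        pr μ (fun ω => ((X₁ ω, X₂ ω), (S ω * X₁ ω, X₂ ω + Z ω)))
          ((val i.2.1, val i.2.2.1), (val i.1 * val i.2.1, val i.2.2.1 + val i.2.2.2))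
          = 2⁻¹ * (wq i.2.1 q₁ * (wq i.2.2.1 q₂ * wq i.2.2.2 p)) := by
      intro i
      refine (pr_comp' μ hμ S X₁ X₂ Z p q₁ q₂ hSrange hX₁range hX₂range hZrange hIndep
        hS1 hS2 hZ hX₁ hX₂
        (fun v => ((v.2.1, v.2.2.1), (v.1 * v.2.1, v.2.2.1 + v.2.2.2)))
        ((val i.2.1, val i.2.2.1),
          (val i.1 * val i.2.1, val i.2.2.1 + val i.2.2.2))).trans ?_
      obtain ⟨s, a, b, z⟩ := i
      cases s <;> cases a <;> cases b <;> cases z <;>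
        · simp only [Fintype.sum_prod_type, Fintype.sum_bool, val, wq, Prod.mk.injEq]
          norm_num
          ring
    simp only [hp]
    simp only [Fintype.sum_prod_type, Fintype.sum_bool, wq, Fb, if_true, Bool.false_eq_true,
      if_false]
    ring
  -- part 2
  have hbc0 : 0 ≤ bconv p q₂ := by
    unfold bconv
    have := mul_nonneg hp0 hq₂0'
    have := mul_nonneg hq₂0 hp0'
    linarith
  have part2 : mi μ (fun ω => (X₁ ω, X₂ ω)) (fun ω => (S ω * X₁ ω, X₂ ω + Z ω))
      = gfun p q₂ - binEnt p := by
    simp only [mi]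
    rw [hE5, hE6, hE7]
    have n1 : Fb (2⁻¹ * (q₁ * (q₂ * p)))
        = q₁ * Fb (2⁻¹ * (q₂ * p)) + (2⁻¹ * (q₂ * p)) * Fb q₁ := by
      rw [show (2⁻¹ * (q₁ * (q₂ * p)) : ℝ) = q₁ * (2⁻¹ * (q₂ * p)) by ring]
      exact Fb_mul hq₁0 (mul_nonneg (by norm_num) (mul_nonneg hq₂0 hp0))
    have n2 : Fb (2⁻¹ * (q₁ * (q₂ * (1 - p))))
        = q₁ * Fb (2⁻¹ * (q₂ * (1 - p))) + (2⁻¹ * (q₂ * (1 - p))) * Fb q₁ := by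
      rw [show (2⁻¹ * (q₁ * (q₂ * (1 - p))) : ℝ) = q₁ * (2⁻¹ * (q₂ * (1 - p))) by ring]
      exact Fb_mul hq₁0 (mul_nonneg (by norm_num) (mul_nonneg hq₂0 hp0'))
    have n3 : Fb (2⁻¹ * (q₁ * ((1 - q₂) * p)))
        = q₁ * Fb (2⁻¹ * ((1 - q₂) * p)) + (2⁻¹ * ((1 - q₂) * p)) * Fb q₁ := by
      rw [show (2⁻¹ * (q₁ * ((1 - q₂) * p)) : ℝ) = q₁ * (2⁻¹ * ((1 - q₂) * p)) by ring]
      exact Fb_mul hq₁0 (mul_nonneg (by norm_num) (mul_nonneg hq₂0' hp0))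
    have n4 : Fb (2⁻¹ * (q₁ * ((1 - q₂) * (1 - p))))
        = q₁ * Fb (2⁻¹ * ((1 - q₂) * (1 - p))) + (2⁻¹ * ((1 - q₂) * (1 - p))) * Fb q₁ := by
      rw [show (2⁻¹ * (q₁ * ((1 - q₂) * (1 - p))) : ℝ)
        = q₁ * (2⁻¹ * ((1 - q₂) * (1 - p))) by ring]
      exact Fb_mul hq₁0 (mul_nonneg (by norm_num) (mul_nonneg hq₂0' hp0'))
    have n5 : Fb (2⁻¹ * ((1 - q₁) * (q₂ * p)))
        = (1 - q₁) * Fb (2⁻¹ * (q₂ * p)) + (2⁻¹ * (q₂ * p)) * Fb (1 - q₁) := by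
      rw [show (2⁻¹ * ((1 - q₁) * (q₂ * p)) : ℝ) = (1 - q₁) * (2⁻¹ * (q₂ * p)) by ring]
      exact Fb_mul hq₁0' (mul_nonneg (by norm_num) (mul_nonneg hq₂0 hp0))
    have n6 : Fb (2⁻¹ * ((1 - q₁) * (q₂ * (1 - p))))
        = (1 - q₁) * Fb (2⁻¹ * (q₂ * (1 - p))) + (2⁻¹ * (q₂ * (1 - p))) * Fb (1 - q₁) := by
      rw [show (2⁻¹ * ((1 - q₁) * (q₂ * (1 - p))) : ℝ)
        = (1 - q₁) * (2⁻¹ * (q₂ * (1 - p))) by ring]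
      exact Fb_mul hq₁0' (mul_nonneg (by norm_num) (mul_nonneg hq₂0 hp0'))
    have n7 : Fb (2⁻¹ * ((1 - q₁) * ((1 - q₂) * p)))
        = (1 - q₁) * Fb (2⁻¹ * ((1 - q₂) * p)) + (2⁻¹ * ((1 - q₂) * p)) * Fb (1 - q₁) := by
      rw [show (2⁻¹ * ((1 - q₁) * ((1 - q₂) * p)) : ℝ)
        = (1 - q₁) * (2⁻¹ * ((1 - q₂) * p)) by ring]
      exact Fb_mul hq₁0' (mul_nonneg (by norm_num) (mul_nonneg hq₂0' hp0))
    have n8 : Fb (2⁻¹ * ((1 - q₁) * ((1 - q₂) * (1 - p))))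
        = (1 - q₁) * Fb (2⁻¹ * ((1 - q₂) * (1 - p)))
          + (2⁻¹ * ((1 - q₂) * (1 - p))) * Fb (1 - q₁) := by
      rw [show (2⁻¹ * ((1 - q₁) * ((1 - q₂) * (1 - p))) : ℝ)
        = (1 - q₁) * (2⁻¹ * ((1 - q₂) * (1 - p))) by ring]
      exact Fb_mul hq₁0' (mul_nonneg (by norm_num) (mul_nonneg hq₂0' hp0'))
    have h1 : Fb (2⁻¹ * (q₂ * p)) = 2⁻¹ * Fb (q₂ * p) - 2⁻¹ * (q₂ * p) :=
      Fb_half (mul_nonneg hq₂0 hp0)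
    have h2 : Fb (2⁻¹ * (q₂ * (1 - p))) = 2⁻¹ * Fb (q₂ * (1 - p)) - 2⁻¹ * (q₂ * (1 - p)) :=
      Fb_half (mul_nonneg hq₂0 hp0')
    have h3 : Fb (2⁻¹ * ((1 - q₂) * p)) = 2⁻¹ * Fb ((1 - q₂) * p) - 2⁻¹ * ((1 - q₂) * p) :=
      Fb_half (mul_nonneg hq₂0' hp0)
    have h4 : Fb (2⁻¹ * ((1 - q₂) * (1 - p)))
        = 2⁻¹ * Fb ((1 - q₂) * (1 - p)) - 2⁻¹ * ((1 - q₂) * (1 - p)) :=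
      Fb_half (mul_nonneg hq₂0' hp0')
    have hbch : Fb (2⁻¹ * bconv p q₂) = 2⁻¹ * Fb (bconv p q₂) - 2⁻¹ * bconv p q₂ :=
      Fb_half hbc0
    have k1 : Fb (q₂ * p) = q₂ * Fb p + p * Fb q₂ := Fb_mul hq₂0 hp0
    have k2 : Fb (q₂ * (1 - p)) = q₂ * Fb (1 - p) + (1 - p) * Fb q₂ := Fb_mul hq₂0 hp0'
    have k3 : Fb ((1 - q₂) * p) = (1 - q₂) * Fb p + p * Fb (1 - q₂) := Fb_mul hq₂0' hp0
    have k4 : Fb ((1 - q₂) * (1 - p)) = (1 - q₂) * Fb (1 - p) + (1 - p) * Fb (1 - q₂) :=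
      Fb_mul hq₂0' hp0'
    have e1 : Fb (q₁ * q₂) = q₁ * Fb q₂ + q₂ * Fb q₁ := Fb_mul hq₁0 hq₂0
    have e2 : Fb (q₁ * (1 - q₂)) = q₁ * Fb (1 - q₂) + (1 - q₂) * Fb q₁ := Fb_mul hq₁0 hq₂0'
    have e3 : Fb ((1 - q₁) * q₂) = (1 - q₁) * Fb q₂ + q₂ * Fb (1 - q₁) := Fb_mul hq₁0' hq₂0
    have e4 : Fb ((1 - q₁) * (1 - q₂)) = (1 - q₁) * Fb (1 - q₂) + (1 - q₂) * Fb (1 - q₁) :=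
      Fb_mul hq₁0' hq₂0'
    have hg : gfun p q₂ = -(p * Fb q₂ + q₂ * Fb p)
        - ((1 - p) * Fb (1 - q₂) + (1 - q₂) * Fb (1 - p)) - Fb (bconv p q₂) := by
      unfold gfun
      rw [show p * q₂ * Real.logb 2 (p * q₂) = Fb (p * q₂) from rfl,
        show (1 - p) * (1 - q₂) * Real.logb 2 ((1 - p) * (1 - q₂))
          = Fb ((1 - p) * (1 - q₂)) from rfl,
        Fb_mul hp0 hq₂0, Fb_mul hp0' hq₂0']
      unfold Fb
      ring
    rw [n1, n2, n3, n4, n5, n6, n7, n8, h1, h2, h3, h4, hbch, k1, k2, k3, k4,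
      e1, e2, e3, e4, hg]
    simp only [binEnt, Fb, bconv]
    ring
  exact ⟨part1, part2⟩
end

section
/- For every p ∈ [0,1], g(p,1/2) - h₂(p) = 1 - h₂(p)/2, where g(p,q₂) = -p q₂ log₂(p q₂) - (1-p)(1-q₂) log₂((1-p)(1-q₂)) - (p*q₂) log₂(p*q₂). Consequently, sup over q₁,q₂ ∈ [0,1] of min{ h₂(q₁), g(p,q₂) - h₂(p) } is at least 1 - h₂(p)/2, which is at least 1/2; i.e., the capacity C^B_{s-c} of Example 6 satisfies C^B_{s-c} ≥ 1 - (1/2)h₂(p) ≥ 1/2. -/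
open scoped BigOperators
open Classical

lemma binEnt_eq_aux (a : ℝ) : binEnt a = Real.binEntropy a / Real.log 2 := by
  simp [binEnt, Real.binEntropy, Real.logb, Real.log_inv]
  ring

lemma binEnt_nonneg {a : ℝ} (h0 : 0 ≤ a) (h1 : a ≤ 1) : 0 ≤ binEnt a := by
  rw [binEnt_eq_aux]
  exact div_nonneg (Real.binEntropy_nonneg h0 h1) (Real.log_nonneg one_le_two)

lemma binEnt_le_one (a : ℝ) : binEnt a ≤ 1 := by
  rw [binEnt_eq_aux, div_le_one (Real.log_pos one_lt_two)]
  exact Real.binEntropy_le_log_two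

lemma binEnt_half : binEnt (1/2 : ℝ) = 1 := by
  have : Real.logb 2 (1/2 : ℝ) = -1 := by
    rw [one_div, Real.logb_inv, Real.logb_self_eq_one] <;> norm_num
  unfold binEnt
  rw [show (1:ℝ)-1/2 = 1/2 by norm_num, this]
  norm_num

lemma mul_logb_half (x : ℝ) : x * Real.logb 2 (x * (1/2)) = x * (Real.logb 2 x - 1) := by
  rcases eq_or_ne x 0 with h | h
  · simp [h]
  · rw [Real.logb_mul h (by norm_num)]
    have : Real.logb 2 ((1:ℝ)/2) = -1 := by
      rw [one_div, Real.logb_inv, Real.logb_self_eq_one] <;> norm_num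
    rw [this]; ring

lemma gfun_half (p : ℝ) : gfun p (1/2) = 1 + binEnt p / 2 := by
  have hb : bconv p (1/2) = 1/2 := by unfold bconv; ring
  have hl : Real.logb 2 ((1:ℝ)/2) = -1 := by
    rw [one_div, Real.logb_inv, Real.logb_self_eq_one] <;> norm_num
  have h1 := mul_logb_half p
  have h2 := mul_logb_half (1-p)
  unfold gfun
  rw [hb, hl]
  have h12 : (1:ℝ) - 1/2 = 1/2 := by norm_num
  rw [h12]
  have e1 : p * (1/2) * Real.logb 2 (p * (1/2)) = (1/2) * (p * (Real.logb 2 p - 1)) := by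
    rw [← h1]; ring
  have e2 : (1-p) * (1/2) * Real.logb 2 ((1-p) * (1/2)) = (1/2) * ((1-p) * (Real.logb 2 (1-p) - 1)) := by
    rw [← h2]; ring
  rw [e1, e2, binEnt]
  ring

/-- **Example 6, lower bound on the capacity.**  For every `p ∈ [0,1]`,
`g(p,1/2) - h₂(p) = 1 - h₂(p)/2`; consequently the supremum over `q₁,q₂ ∈ [0,1]` of
`min{h₂(q₁), g(p,q₂) - h₂(p)}` is at least `1 - h₂(p)/2`, which is at least `1/2`. -/
theorem example6_capacity_lower_bound
    (p : ℝ) (hp : p ∈ Set.Icc (0:ℝ) 1) :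
    gfun p (1/2) - binEnt p = 1 - binEnt p / 2 ∧
    (1:ℝ)/2 ≤ 1 - binEnt p / 2 ∧
    1 - binEnt p / 2 ≤
      sSup {r : ℝ | ∃ q₁ ∈ Set.Icc (0:ℝ) 1, ∃ q₂ ∈ Set.Icc (0:ℝ) 1,
        r = min (binEnt q₁) (gfun p q₂ - binEnt p)} := by
  obtain ⟨hp0, hp1⟩ := hp
  have hent_nonneg := binEnt_nonneg hp0 hp1
  have hent_le := binEnt_le_one p
  have heq : gfun p (1/2) - binEnt p = 1 - binEnt p / 2 := by
    rw [gfun_half]; ring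
  refine ⟨heq, by linarith, ?_⟩
  have hmem : (1 - binEnt p / 2) ∈ {r : ℝ | ∃ q₁ ∈ Set.Icc (0:ℝ) 1, ∃ q₂ ∈ Set.Icc (0:ℝ) 1,
      r = min (binEnt q₁) (gfun p q₂ - binEnt p)} := by
    refine ⟨1/2, by norm_num, 1/2, by norm_num, ?_⟩
    rw [binEnt_half, heq, min_eq_right (by linarith)]
  refine le_csSup ⟨1, ?_⟩ hmem
  rintro r ⟨q₁, hq₁, q₂, hq₂, rfl⟩
  exact le_trans (min_le_left _ _) (binEnt_le_one q₁)
end
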